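/- Under the assumptions that (1) the effect of the unobserved confounder U on the potential outcome Y(d^L) is time-invariant, i.e. E[Y_{t+1}(d^L) | U_{t+1}=u_1, X_{t+1}=x, C=c] - E[Y_{t+1}(d^L) | U_{t+1}=u_0, X_{t+1}=x, C=c] = E[Y_t(d^L) | U_t=u_1, X_t=x, C=c] - E[Y_t(d^L) | U_t=u_0, X_t=x, C=c] for all u_1, u_0, x, c, and (2) the imbalance of U is time-invariant, i.e. the difference between the conditional CDFs of U_{t+1} given D=d^H versus D=d^L (conditional on X_{t+1}=x, C=c) equals the difference between the conditional CDFs of U_t given D=d^H versus D=d^L (conditional on X_t=x, C=c), and (3) Y_{t+1}(d^L) ⊥ D | (U_{t+1}, X_{t+1}, C) and Y_t(d^L) ⊥ D | (U_t, X_t, C), then for all x, c: E[Y_{t+1}(d^L) | D=d^H, X_{t+1}=x, C=c] - E[Y_{t+1}(d^L) | D=d^L, X_{t+1}=x, C=c] = E[Y_t(d^L) | D=d^H, X_t=x, C=c] - E[Y_t(d^L) | D=d^L, X_t=x, C=c]. -/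
import Mathlib


open MeasureTheory ProbabilityTheory

/-- Under (1) time-invariant effect of the unobserved confounder `U` on the potential outcome
`Y(dL)`, (2) time-invariant imbalance of `U` across treatment arms (equality of differences of
conditional CDFs), and (3) conditional ignorability given `(U, X, C)` at both time periods
(expressed by saying the confounder-specific regressions are versions of the conditional means
within each treatment arm), the conditional selection bias at time `t+1` equals the conditional
selection bias at time `t`. -/
theorem stmt1 {Ω : Type*} [MeasurableSpace Ω] (P : Measure Ω) [IsProbabilityMeasure P]
    {α β γ : Type*}
    (D : Ω → α) (dH dL : α)
    (Ut Ut1 : Ω → ℝ) (Xt Xt1 : Ω → β) (C : Ω → γ)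
    (Yt Yt1 : Ω → ℝ)   -- potential outcomes Y_t(dL) and Y_{t+1}(dL)
    (hUt : Measurable Ut) (hUt1 : Measurable Ut1)
    (hYt : Integrable Yt P) (hYt1 : Integrable Yt1 P)
    -- confounder-specific regressions:
    -- g1 u x c = E[Y_{t+1}(dL) | U_{t+1} = u, X_{t+1} = x, C = c]
    -- g0 u x c = E[Y_t(dL) | U_t = u, X_t = x, C = c]
    (g1 g0 : ℝ → β → γ → ℝ)
    (hg1int : ∀ d x c, Integrable (fun u => g1 u x c)
      (Measure.map Ut1 (P[|{ω | D ω = d ∧ Xt1 ω = x ∧ C ω = c}])))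
    (hg0int : ∀ d x c, Integrable (fun u => g0 u x c)
      (Measure.map Ut (P[|{ω | D ω = d ∧ Xt ω = x ∧ C ω = c}])))
    -- (1) time-invariant effect of the unobserved confounder
    (hEffect : ∀ (u1 u0 : ℝ) (x : β) (c : γ),
      g1 u1 x c - g1 u0 x c = g0 u1 x c - g0 u0 x c)
    -- (2) time-invariant imbalance of the unobserved confounder (difference of conditional CDFs)
    (hImbalance : ∀ (u : ℝ) (x : β) (c : γ),
      ((Measure.map Ut1 (P[|{ω | D ω = dH ∧ Xt1 ω = x ∧ C ω = c}])) (Set.Iic u)).toReal -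
          ((Measure.map Ut1 (P[|{ω | D ω = dL ∧ Xt1 ω = x ∧ C ω = c}])) (Set.Iic u)).toReal =
        ((Measure.map Ut (P[|{ω | D ω = dH ∧ Xt ω = x ∧ C ω = c}])) (Set.Iic u)).toReal -
          ((Measure.map Ut (P[|{ω | D ω = dL ∧ Xt ω = x ∧ C ω = c}])) (Set.Iic u)).toReal)
    -- (3) conditional ignorability at time t+1: Y_{t+1}(dL) ⊥ D | (U_{t+1}, X_{t+1}, C)
    (hCI1 : ∀ (d : α) (x : β) (c : γ), P {ω | D ω = d ∧ Xt1 ω = x ∧ C ω = c} ≠ 0 →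
      ∀ A : Set ℝ, MeasurableSet A →
        (∫ ω in {ω | Ut1 ω ∈ A}, Yt1 ω ∂(P[|{ω | D ω = d ∧ Xt1 ω = x ∧ C ω = c}])) =
          ∫ u in A, g1 u x c ∂(Measure.map Ut1 (P[|{ω | D ω = d ∧ Xt1 ω = x ∧ C ω = c}])))
    -- (3) conditional ignorability at time t: Y_t(dL) ⊥ D | (U_t, X_t, C)
    (hCI0 : ∀ (d : α) (x : β) (c : γ), P {ω | D ω = d ∧ Xt ω = x ∧ C ω = c} ≠ 0 →
      ∀ A : Set ℝ, MeasurableSet A →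
        (∫ ω in {ω | Ut ω ∈ A}, Yt ω ∂(P[|{ω | D ω = d ∧ Xt ω = x ∧ C ω = c}])) =
          ∫ u in A, g0 u x c ∂(Measure.map Ut (P[|{ω | D ω = d ∧ Xt ω = x ∧ C ω = c}]))) :
    ∀ (x : β) (c : γ),
      P {ω | D ω = dH ∧ Xt1 ω = x ∧ C ω = c} ≠ 0 →
      P {ω | D ω = dL ∧ Xt1 ω = x ∧ C ω = c} ≠ 0 →
      P {ω | D ω = dH ∧ Xt ω = x ∧ C ω = c} ≠ 0 →
      P {ω | D ω = dL ∧ Xt ω = x ∧ C ω = c} ≠ 0 →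
      (∫ ω, Yt1 ω ∂(P[|{ω | D ω = dH ∧ Xt1 ω = x ∧ C ω = c}])) -
          (∫ ω, Yt1 ω ∂(P[|{ω | D ω = dL ∧ Xt1 ω = x ∧ C ω = c}])) =
        (∫ ω, Yt ω ∂(P[|{ω | D ω = dH ∧ Xt ω = x ∧ C ω = c}])) -
          (∫ ω, Yt ω ∂(P[|{ω | D ω = dL ∧ Xt ω = x ∧ C ω = c}])) := by
  intro x c hH1 hL1 hH0 hL0
  haveI pH1 : IsProbabilityMeasure (P[|{ω | D ω = dH ∧ Xt1 ω = x ∧ C ω = c}]) :=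
    cond_isProbabilityMeasure hH1
  haveI pL1 : IsProbabilityMeasure (P[|{ω | D ω = dL ∧ Xt1 ω = x ∧ C ω = c}]) :=
    cond_isProbabilityMeasure hL1
  haveI pH0 : IsProbabilityMeasure (P[|{ω | D ω = dH ∧ Xt ω = x ∧ C ω = c}]) :=
    cond_isProbabilityMeasure hH0
  haveI pL0 : IsProbabilityMeasure (P[|{ω | D ω = dL ∧ Xt ω = x ∧ C ω = c}]) :=
    cond_isProbabilityMeasure hL0
  set μ1H := Measure.map Ut1 (P[|{ω | D ω = dH ∧ Xt1 ω = x ∧ C ω = c}]) with hμ1H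
  set μ1L := Measure.map Ut1 (P[|{ω | D ω = dL ∧ Xt1 ω = x ∧ C ω = c}]) with hμ1L
  set μ0H := Measure.map Ut (P[|{ω | D ω = dH ∧ Xt ω = x ∧ C ω = c}]) with hμ0H
  set μ0L := Measure.map Ut (P[|{ω | D ω = dL ∧ Xt ω = x ∧ C ω = c}]) with hμ0L
  haveI : IsProbabilityMeasure μ1H := Measure.isProbabilityMeasure_map hUt1.aemeasurable
  haveI : IsProbabilityMeasure μ1L := Measure.isProbabilityMeasure_map hUt1.aemeasurable
  haveI : IsProbabilityMeasure μ0H := Measure.isProbabilityMeasure_map hUt.aemeasurable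
  haveI : IsProbabilityMeasure μ0L := Measure.isProbabilityMeasure_map hUt.aemeasurable
  -- express conditional means via g
  have e1H : (∫ ω, Yt1 ω ∂(P[|{ω | D ω = dH ∧ Xt1 ω = x ∧ C ω = c}])) =
      ∫ u, g1 u x c ∂μ1H := by
    have h := hCI1 dH x c hH1 Set.univ MeasurableSet.univ
    simpa [Set.setOf_true] using h
  have e1L : (∫ ω, Yt1 ω ∂(P[|{ω | D ω = dL ∧ Xt1 ω = x ∧ C ω = c}])) =
      ∫ u, g1 u x c ∂μ1L := by
    have h := hCI1 dL x c hL1 Set.univ MeasurableSet.univ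
    simpa [Set.setOf_true] using h
  have e0H : (∫ ω, Yt ω ∂(P[|{ω | D ω = dH ∧ Xt ω = x ∧ C ω = c}])) =
      ∫ u, g0 u x c ∂μ0H := by
    have h := hCI0 dH x c hH0 Set.univ MeasurableSet.univ
    simpa [Set.setOf_true] using h
  have e0L : (∫ ω, Yt ω ∂(P[|{ω | D ω = dL ∧ Xt ω = x ∧ C ω = c}])) =
      ∫ u, g0 u x c ∂μ0L := by
    have h := hCI0 dL x c hL0 Set.univ MeasurableSet.univ
    simpa [Set.setOf_true] using h
  -- g1 = g0 + constant
  set k : ℝ := g1 0 x c - g0 0 x c with hk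
  have hgk : ∀ u, g1 u x c = g0 u x c + k := by
    intro u
    have h := hEffect u 0 x c
    simp only [hk]
    linarith
  -- integrability of g0 against all four measures
  have hfun : (fun u => g0 u x c) = fun u => g1 u x c - k := by
    funext u; rw [hgk u]; ring
  have hg0_1H : Integrable (fun u => g0 u x c) μ1H := by
    rw [hfun]; exact (hg1int dH x c).sub (integrable_const k)
  have hg0_1L : Integrable (fun u => g0 u x c) μ1L := by
    rw [hfun]; exact (hg1int dL x c).sub (integrable_const k)
  have hg0_0H : Integrable (fun u => g0 u x c) μ0H := hg0int dH x c
  have hg0_0L : Integrable (fun u => g0 u x c) μ0L := hg0int dL x c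
  -- equality of measures μ1H + μ0L = μ0H + μ1L
  have hmeas : μ1H + μ0L = μ0H + μ1L := by
    apply MeasureTheory.Measure.ext_of_Iic _ _
    intro u
    have h := hImbalance u x c
    rw [Measure.add_apply, Measure.add_apply]
    have f1 : μ1H (Set.Iic u) ≠ ⊤ := measure_ne_top _ _
    have f2 : μ0L (Set.Iic u) ≠ ⊤ := measure_ne_top _ _
    have f3 : μ0H (Set.Iic u) ≠ ⊤ := measure_ne_top _ _
    have f4 : μ1L (Set.Iic u) ≠ ⊤ := measure_ne_top _ _
    refine (ENNReal.toReal_eq_toReal_iff' (by finiteness) (by finiteness)).mp ?_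
    rw [ENNReal.toReal_add f1 f2, ENNReal.toReal_add f3 f4]
    linarith
  -- main algebraic step
  have key : (∫ u, g0 u x c ∂μ1H) + (∫ u, g0 u x c ∂μ0L) =
      (∫ u, g0 u x c ∂μ0H) + (∫ u, g0 u x c ∂μ1L) := by
    rw [← integral_add_measure hg0_1H hg0_0L, ← integral_add_measure hg0_0H hg0_1L, hmeas]
  have i1H : (∫ u, g1 u x c ∂μ1H) = (∫ u, g0 u x c ∂μ1H) + k := by
    simp_rw [hgk]
    rw [integral_add hg0_1H (integrable_const k), integral_const]
    simp
  have i1L : (∫ u, g1 u x c ∂μ1L) = (∫ u, g0 u x c ∂μ1L) + k := by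
    simp_rw [hgk]
    rw [integral_add hg0_1L (integrable_const k), integral_const]
    simp
  rw [e1H, e1L, e0H, e0L, i1H, i1L]
  linarith
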